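/- Let 0 < ν < η < 1, μ = 1 − ν, α > 0, let (C_N) be a sequence of integers with 1 ≤ C_N ≤ N−1 and C_N = ηN + O(1), and set α_N = α·N·(1−ν)^N. Then lim_{N→∞} N · ν ∫₀¹ (1−u)^{C_N} (1 + (ν/μ)u)^{N−C_N−1} u^{α_N} du = ν(1−ν)/(η−ν). -/

import Mathlib

open Filter Topology MeasureTheory Asymptotics Set Real

lemma auxCNdiv (C : ℕ → ℕ) (η K : ℝ)
    (hK : ∀ᶠ N in atTop, |(C N : ℝ) - η * N| ≤ K) :
    Tendsto (fun N : ℕ => (C N : ℝ) / N) atTop (𝓝 η) := by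
  have h0 : Tendsto (fun N : ℕ => ((C N : ℝ) - η * N) / N) atTop (𝓝 0) := by
    apply squeeze_zero_norm' (a := fun N : ℕ => K / N)
    · filter_upwards [hK, eventually_gt_atTop 0] with N hN hN1
      have hN0 : (0:ℝ) < N := by exact_mod_cast hN1
      rw [Real.norm_eq_abs, abs_div, abs_of_pos hN0]
      gcongr
    · exact tendsto_const_div_atTop_nhds_zero_nat K
  have := h0.add tendsto_const_nhds (b := η)
  rw [zero_add] at this
  apply this.congr'
  filter_upwards [eventually_gt_atTop 0] with N hN1
  have hN0 : (N:ℝ) ≠ 0 := by positivity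
  field_simp
  ring

lemma auxNlog (t : ℝ) :
    Tendsto (fun N : ℕ => (N : ℝ) * Real.log (1 + t / N)) atTop (𝓝 t) :=
  (Real.tendsto_mul_log_one_add_div_atTop t).comp tendsto_natCast_atTop_atTop

lemma auxAlpha (α r u : ℝ) (hr0 : 0 ≤ r) (hr1 : r < 1) :
    Tendsto (fun N : ℕ => α * N * r ^ N * (Real.log u - Real.log N)) atTop (𝓝 0) := by
  have h1 : Tendsto (fun N : ℕ => α * Real.log u * ((N:ℝ) ^ 1 * r ^ N)) atTop (𝓝 0) := by
    simpa using (tendsto_pow_const_mul_const_pow_of_lt_one 1 hr0 hr1).const_mul (α * Real.log u)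
  have h2 : Tendsto (fun N : ℕ => (N:ℝ) * Real.log N * r ^ N) atTop (𝓝 0) := by
    apply squeeze_zero_norm' (a := fun N : ℕ => (N:ℝ) ^ 2 * r ^ N)
    · filter_upwards [eventually_ge_atTop 1] with N hN1
      have hN0 : (1:ℝ) ≤ N := by exact_mod_cast hN1
      have hlog0 : 0 ≤ Real.log N := Real.log_nonneg hN0
      have hlogN : Real.log N ≤ N := (Real.log_le_sub_one_of_pos (by linarith)).trans (by linarith)
      rw [Real.norm_eq_abs, abs_of_nonneg (by positivity)]
      calc (N:ℝ) * Real.log N * r ^ N ≤ (N:ℝ) * (N:ℝ) * r ^ N := by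
            exact mul_le_mul_of_nonneg_right
              (mul_le_mul_of_nonneg_left hlogN (by positivity)) (by positivity)
        _ = (N:ℝ) ^ 2 * r ^ N := by ring
    · exact tendsto_pow_const_mul_const_pow_of_lt_one 2 hr0 hr1
  have h2' := h2.const_mul α
  have h3 := (h1.sub h2').congr (fun N => by ring :
    ∀ N : ℕ, α * Real.log u * ((N:ℝ) ^ 1 * r ^ N) - α * ((N:ℝ) * Real.log (N:ℝ) * r ^ N)
      = α * N * r ^ N * (Real.log u - Real.log N))
  simpa using h3

set_option maxHeartbeats 2000000 in
/-- Sub-critical regime: asymptotics of the coefficient `b_N(α_N)`, namely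
`N · b_N(α_N) → ν(1-ν)/(η-ν)`. -/
theorem subcritical_bN_asymptotics
    (ν η μ α : ℝ) (hν : 0 < ν) (hνη : ν < η) (hη : η < 1) (hμ : μ = 1 - ν)
    (hα : 0 < α) (C : ℕ → ℕ)
    (hC1 : ∀ᶠ N in atTop, 1 ≤ C N ∧ C N + 1 ≤ N)
    (hC : (fun N : ℕ => (C N : ℝ) - η * N) =O[atTop] fun _ : ℕ => (1 : ℝ))
    (αN : ℕ → ℝ) (hαN : ∀ N : ℕ, αN N = α * N * (1 - ν) ^ N) :
    Tendsto (fun N : ℕ =>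
        (N : ℝ) * (ν * ∫ u in Set.Ioo (0:ℝ) 1,
          (1 - u) ^ (C N) * (1 + (ν / μ) * u) ^ (N - C N - 1) * u ^ (αN N)))
      atTop (𝓝 (ν * (1 - ν) / (η - ν))) := by
  subst hμ
  have hν1 : ν < 1 := hνη.trans hη
  have h1ν : (0:ℝ) < 1 - ν := by linarith
  set c : ℝ := ν / (1 - ν) with hc
  have hc0 : 0 ≤ c := by positivity
  set δ : ℝ := η - c * (1 - η) with hδdef
  have hδeq : δ = (η - ν) / (1 - ν) := by
    rw [hδdef, hc]; field_simp; ring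
  have hδ : 0 < δ := by rw [hδeq]; apply div_pos <;> linarith
  obtain ⟨K₀, hK₀⟩ := hC.bound
  set K : ℝ := max K₀ 0 with hKdef
  have hK0 : 0 ≤ K := le_max_right _ _
  have hKev : ∀ᶠ N in atTop, |(C N : ℝ) - η * N| ≤ K := by
    filter_upwards [hK₀] with N h
    rw [Real.norm_eq_abs, norm_one, mul_one] at h
    exact h.trans (le_max_left _ _)
  have hαN0 : ∀ N, 0 ≤ αN N := fun N => by
    rw [hαN]
    exact mul_nonneg (mul_nonneg hα.le (Nat.cast_nonneg _)) (pow_nonneg h1ν.le _)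
  -- the rescaled integrands
  set f : ℝ → ℝ := (Ioi (0:ℝ)).indicator (fun u => ν * Real.exp (-δ * u)) with hf
  set bound : ℝ → ℝ := (Ioi (0:ℝ)).indicator
    (fun u => (ν * Real.exp (K + c * K)) * Real.exp (-δ * u)) with hbound
  -- measurability
  have hFmeas : ∀ᶠ N : ℕ in atTop, AEStronglyMeasurable ((Ioc (0:ℝ) (N:ℝ)).indicator (fun u => ν * ((1 - u/N) ^ (C N) * (1 + c * (u/N)) ^ (N - C N - 1) * (u/N) ^ (αN N)))) volume := by
    apply Eventually.of_forall
    intro N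
    have h1 : Continuous fun u : ℝ => u / (N:ℝ) := continuous_id.div_const _
    have hcont : Continuous (fun u : ℝ => ν * ((1 - u/(N:ℝ)) ^ (C N)
        * (1 + c * (u/(N:ℝ))) ^ (N - C N - 1) * (u/(N:ℝ)) ^ (αN N))) :=
      continuous_const.mul ((((continuous_const.sub h1).pow _).mul
        ((continuous_const.add (continuous_const.mul h1)).pow _)).mul
        ((Real.continuous_rpow_const (hαN0 N)).comp h1))
    exact (hcont.measurable.indicator measurableSet_Ioc).aestronglyMeasurable
  -- integrability of the dominating function
  have hbint : Integrable bound := by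
    apply IntegrableOn.integrable_indicator _ measurableSet_Ioi
    exact (exp_neg_integrableOn_Ioi 0 hδ).const_mul _
  -- domination
  have hdom : ∀ᶠ N : ℕ in atTop, ∀ᵐ u : ℝ, ‖((Ioc (0:ℝ) (N:ℝ)).indicator (fun u => ν * ((1 - u/N) ^ (C N) * (1 + c * (u/N)) ^ (N - C N - 1) * (u/N) ^ (αN N)))) u‖ ≤ bound u := by
    filter_upwards [hC1, hKev, eventually_ge_atTop 1] with N hC1N hKN hN1
    apply Eventually.of_forall
    intro u
    by_cases hu : u ∈ Ioc (0:ℝ) (N:ℝ)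
    · obtain ⟨hu0, huN⟩ := hu
      have hN0 : (0:ℝ) < N := lt_of_lt_of_le hu0 huN
      have hx0 : 0 ≤ u / N := by positivity
      have hx1 : u / N ≤ 1 := (div_le_one hN0).2 huN
      have hNx : (N:ℝ) * (u / N) = u := by field_simp
      have hCK1 : η * N - K ≤ C N := by
        have := (abs_le.1 hKN).1; linarith
      have ha0 : (0:ℝ) ≤ 1 - u/N := by linarith
      have hb00 : (0:ℝ) ≤ 1 + c * (u/N) := by positivity
      rw [Set.indicator_of_mem (Set.mem_Ioc.mpr ⟨hu0, huN⟩),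
        hbound, Set.indicator_of_mem (Set.mem_Ioi.mpr hu0)]
      have hval0 : 0 ≤ (1 - u/N) ^ (C N) * (1 + c * (u/N)) ^ (N - C N - 1) * (u/N) ^ (αN N) :=
        mul_nonneg (mul_nonneg (pow_nonneg ha0 _) (pow_nonneg hb00 _)) (Real.rpow_nonneg hx0 _)
      rw [Real.norm_eq_abs, abs_of_nonneg (mul_nonneg hν.le hval0)]
      -- bound each factor
      have ha : (1 - u/N) ^ (C N) ≤ Real.exp (-(η*u) + K) := by
        have e1 : 1 - u/N ≤ Real.exp (-(u/N)) := by
          have := Real.add_one_le_exp (-(u/N)); linarith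
        calc (1 - u/N) ^ (C N) ≤ (Real.exp (-(u/N))) ^ (C N) := pow_le_pow_left₀ ha0 e1 _
          _ = Real.exp ((C N) * (-(u/N))) := (Real.exp_nat_mul _ _).symm
          _ ≤ Real.exp (-(η*u) + K) := by
              rw [Real.exp_le_exp]
              have h1 : (η*N - K) * (u/N) ≤ (C N) * (u/N) :=
                mul_le_mul_of_nonneg_right hCK1 hx0
              have h2 : K * (u/N) ≤ K * 1 := mul_le_mul_of_nonneg_left hx1 hK0
              nlinarith [hNx]
      have hmle : ((N - C N - 1 : ℕ) : ℝ) ≤ (1 - η) * N + K := by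
        have hcast : ((N - C N - 1 : ℕ) : ℝ) = (N:ℝ) - (C N) - 1 := by
          rw [Nat.sub_sub, Nat.cast_sub hC1N.2]
          push_cast; ring
        rw [hcast]; linarith
      have hb : (1 + c * (u/N)) ^ (N - C N - 1) ≤ Real.exp (c*(1-η)*u + c*K) := by
        have e2 : 1 + c * (u/N) ≤ Real.exp (c * (u/N)) := by
          have := Real.add_one_le_exp (c * (u/N)); linarith
        calc (1 + c * (u/N)) ^ (N - C N - 1)
            ≤ (Real.exp (c * (u/N))) ^ (N - C N - 1) := pow_le_pow_left₀ hb00 e2 _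
          _ = Real.exp ((N - C N - 1 : ℕ) * (c * (u/N))) := (Real.exp_nat_mul _ _).symm
          _ ≤ Real.exp (c*(1-η)*u + c*K) := by
              rw [Real.exp_le_exp]
              have hcx0 : 0 ≤ c * (u/N) := by positivity
              have h1 : ((N - C N - 1 : ℕ):ℝ) * (c * (u/N)) ≤ ((1-η)*N + K) * (c * (u/N)) :=
                mul_le_mul_of_nonneg_right hmle hcx0
              have h2 : c * K * (u/N) ≤ c * K * 1 :=
                mul_le_mul_of_nonneg_left hx1 (by positivity)
              nlinarith [hNx]
      have hd : (u/N) ^ (αN N) ≤ 1 := Real.rpow_le_one hx0 hx1 (hαN0 N)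
      calc ν * ((1 - u/N) ^ (C N) * (1 + c * (u/N)) ^ (N - C N - 1) * (u/N) ^ (αN N))
          ≤ ν * (Real.exp (-(η*u) + K) * Real.exp (c*(1-η)*u + c*K) * 1) := by
            apply mul_le_mul_of_nonneg_left _ hν.le
            exact mul_le_mul (mul_le_mul ha hb (pow_nonneg hb00 _) (Real.exp_pos _).le)
              hd (Real.rpow_nonneg hx0 _) (by positivity)
        _ = ν * Real.exp (K + c * K) * Real.exp (-δ * u) := by
            have hexps : -(η*u) + K + (c*(1-η)*u + c*K) = (K + c*K) + (-δ*u) := by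
              rw [hδdef]; ring
            rw [mul_one, ← Real.exp_add, hexps, Real.exp_add, ← mul_assoc]
    · rw [Set.indicator_of_notMem hu, norm_zero, hbound]
      apply Set.indicator_nonneg
      intro x _
      positivity
  -- pointwise convergence
  have hlim : ∀ᵐ u : ℝ, Tendsto (fun N : ℕ => ((Ioc (0:ℝ) (N:ℝ)).indicator (fun u => ν * ((1 - u/N) ^ (C N) * (1 + c * (u/N)) ^ (N - C N - 1) * (u/N) ^ (αN N)))) u) atTop (𝓝 (f u)) := by
    apply Eventually.of_forall
    intro u
    rcases le_or_gt u 0 with hu | hu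
    · have hFu : ∀ N : ℕ, ((Ioc (0:ℝ) (N:ℝ)).indicator (fun u => ν * ((1 - u/N) ^ (C N) * (1 + c * (u/N)) ^ (N - C N - 1) * (u/N) ^ (αN N)))) u = 0 := fun N =>
        Set.indicator_of_notMem (fun h => absurd h.1 (not_lt.2 hu)) _
      have hfu : f u = 0 := Set.indicator_of_notMem (by simpa using hu) _
      rw [hfu]
      exact tendsto_const_nhds.congr (fun N => (hFu N).symm)
    · have hfu : f u = ν * Real.exp (-δ * u) := Set.indicator_of_mem hu _
      rw [hfu]
      -- the three log-limits
      have hA : Tendsto (fun N : ℕ => Real.log (1 - u/N) * (C N)) atTop (𝓝 (-(η*u))) := by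
        have h := (auxCNdiv C η K hKev).mul (auxNlog (-u))
        rw [show η * -u = -(η*u) by ring] at h
        apply h.congr'
        filter_upwards [eventually_ge_atTop 1] with N hN1
        have hN0 : (N:ℝ) ≠ 0 := by positivity
        rw [neg_div, ← sub_eq_add_neg]
        field_simp
      have hB : Tendsto (fun N : ℕ => Real.log (1 + c * (u/N)) * ((N - C N - 1 : ℕ):ℝ))
          atTop (𝓝 (c*u*(1-η))) := by
        have hm : Tendsto (fun N : ℕ => ((N - C N - 1 : ℕ):ℝ) / N) atTop (𝓝 (1 - η)) := by
          have h := (tendsto_const_nhds (x := (1:ℝ)).sub (auxCNdiv C η K hKev)).sub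
            tendsto_one_div_atTop_nhds_zero_nat
          rw [sub_zero] at h
          apply h.congr'
          filter_upwards [hC1, eventually_ge_atTop 1] with N hC1N hN1
          have hN0 : (N:ℝ) ≠ 0 := by positivity
          have hcast : ((N - C N - 1 : ℕ) : ℝ) = (N:ℝ) - (C N) - 1 := by
            rw [Nat.sub_sub, Nat.cast_sub hC1N.2]; push_cast; ring
          rw [hcast]
          field_simp
        have h := hm.mul (auxNlog (c*u))
        rw [show (1-η) * (c*u) = c*u*(1-η) by ring] at h
        apply h.congr'
        filter_upwards [eventually_ge_atTop 1] with N hN1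
        have hN0 : (N:ℝ) ≠ 0 := by positivity
        rw [mul_div_assoc]
        field_simp
      have hD : Tendsto (fun N : ℕ => Real.log (u/N) * αN N) atTop (𝓝 0) := by
        have h := auxAlpha α (1-ν) u (by linarith) (by linarith)
        apply h.congr'
        filter_upwards [eventually_ge_atTop 1] with N hN1
        have hN0 : (N:ℝ) ≠ 0 := by positivity
        rw [hαN, Real.log_div hu.ne' hN0]
        ring
      have hexp := ((hA.add hB).add hD)
      have hlim2 := ((Real.continuous_exp.tendsto _).comp hexp).const_mul ν
      rw [show -(η*u) + c*u*(1-η) + 0 = -δ*u by rw [hδdef]; ring] at hlim2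
      apply hlim2.congr'
      filter_upwards [tendsto_natCast_atTop_atTop.eventually_gt_atTop u,
        eventually_ge_atTop 1] with N huN hN1
      have hN0 : (0:ℝ) < N := lt_trans hu huN
      have hx0 : (0:ℝ) < u / N := by positivity
      have h1x : (0:ℝ) < 1 - u/N := by
        have : u / N < 1 := (div_lt_one hN0).2 huN
        linarith
      have h2x : (0:ℝ) < 1 + c * (u/N) := by positivity
      simp only [Function.comp_apply]
      rw [Set.indicator_of_mem (Set.mem_Ioc.mpr ⟨hu, huN.le⟩)]
      rw [Real.exp_add, Real.exp_add]
      congr 1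
      rw [mul_comm (Real.log (1 - u/N)) ((C N:ℝ)), Real.exp_nat_mul, Real.exp_log h1x,
        mul_comm (Real.log (1 + c * (u/N))) _, Real.exp_nat_mul, Real.exp_log h2x,
        ← Real.rpow_def_of_pos hx0]
  -- dominated convergence
  have key : Tendsto (fun N : ℕ => ∫ u, ((Ioc (0:ℝ) (N:ℝ)).indicator (fun u => ν * ((1 - u/N) ^ (C N) * (1 + c * (u/N)) ^ (N - C N - 1) * (u/N) ^ (αN N)))) u) atTop (𝓝 (∫ u, f u)) :=
    tendsto_integral_filter_of_dominated_convergence bound hFmeas hdom hbint hlim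
  -- value of the limit integral
  have hval : ∫ u, f u = ν * (1 - ν) / (η - ν) := by
    rw [hf, integral_indicator measurableSet_Ioi, MeasureTheory.integral_const_mul]
    have h := integral_comp_mul_left_Ioi (fun x => Real.exp (-x)) 0 hδ
    simp only [mul_zero, neg_zero] at h
    rw [integral_exp_neg_Ioi] at h
    have h2 : ∫ u in Ioi (0:ℝ), Real.exp (-δ * u) = δ⁻¹ := by
      rw [show (fun u : ℝ => Real.exp (-δ * u)) = (fun u : ℝ => Real.exp (-(δ * u))) by
        funext u; rw [neg_mul]]
      rw [h, neg_zero, Real.exp_zero, smul_eq_mul, mul_one]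
    rw [h2, hδeq, inv_div]
    ring
  rw [← hval]
  -- change of variables: relating the two integrals
  apply key.congr'
  filter_upwards [hC1] with N hC1N
  have hNnat : 0 < N := by omega
  have hN0 : (0:ℝ) < N := by exact_mod_cast hNnat
  calc ∫ u, ((Ioc (0:ℝ) (N:ℝ)).indicator (fun u => ν * ((1 - u/N) ^ (C N) * (1 + c * (u/N)) ^ (N - C N - 1) * (u/N) ^ (αN N)))) u
      = ∫ x in Ioc (0:ℝ) (N:ℝ), ν * ((1 - x/N) ^ (C N)
          * (1 + c * (x/N)) ^ (N - C N - 1) * (x/N) ^ (αN N)) := by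
        rw [integral_indicator measurableSet_Ioc]
    _ = ∫ x in (0:ℝ)..(N:ℝ), ν * ((1 - x/N) ^ (C N)
          * (1 + c * (x/N)) ^ (N - C N - 1) * (x/N) ^ (αN N)) :=
        (intervalIntegral.integral_of_le hN0.le).symm
    _ = (N:ℝ) • ∫ x in (0:ℝ)/N..(N:ℝ)/N, ν * ((1 - x) ^ (C N)
          * (1 + c * x) ^ (N - C N - 1) * x ^ (αN N)) :=
        intervalIntegral.integral_comp_div
          (f := fun x => ν * ((1 - x) ^ (C N) * (1 + c * x) ^ (N - C N - 1) * x ^ (αN N)))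
          hN0.ne'
    _ = (N:ℝ) * (ν * ∫ u in Ioo (0:ℝ) 1,
          (1 - u) ^ (C N) * (1 + c * u) ^ (N - C N - 1) * u ^ (αN N)) := by
        rw [zero_div, div_self hN0.ne', smul_eq_mul,
          intervalIntegral.integral_of_le zero_le_one, integral_Ioc_eq_integral_Ioo,
          MeasureTheory.integral_const_mul]
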